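/- For Z standard normal and any real α, the conditional variance Var(Z | Z > α) = 1 − λ(α)(λ(α) − α), where λ(α) = φ(α)/(1 − Φ(α)); moreover this quantity lies strictly between 0 and 1. -/

import Mathlib

open MeasureTheory ProbabilityTheory Set Real Filter Topology
open scoped ENNReal NNReal

noncomputable def phi (x : ℝ) : ℝ := (Real.sqrt (2 * Real.pi))⁻¹ * Real.exp (-x ^ 2 / 2)
noncomputable def Phi (x : ℝ) : ℝ := ∫ u in Iio x, phi u
noncomputable def lam (α : ℝ) : ℝ := phi α / (1 - Phi α)

lemma phi_eq : gaussianPDFReal 0 1 = phi := by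
  ext x
  simp only [gaussianPDFReal, phi, NNReal.coe_one, mul_one, sub_zero]

lemma phi_pos (x : ℝ) : 0 < phi x := by
  unfold phi
  positivity

lemma phi_eq' (x : ℝ) : phi x = (Real.sqrt (2 * Real.pi))⁻¹ * Real.exp (-(1/2) * x ^ 2) := by
  unfold phi; ring_nf

lemma integrable_phi : Integrable phi := phi_eq ▸ integrable_gaussianPDFReal 0 1

lemma integrable_id_phi : Integrable (fun x => x * phi x) := by
  have h := (integrable_rpow_mul_exp_neg_mul_sq (b := 1/2) (by norm_num) (s := 1)
    (by norm_num)).const_mul (Real.sqrt (2 * Real.pi))⁻¹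
  refine h.congr (Filter.EventuallyEq.of_eq (funext fun x => ?_))
  rw [Real.rpow_one, phi_eq']
  ring

lemma integrable_sq_phi : Integrable (fun x => x ^ 2 * phi x) := by
  have h := (integrable_rpow_mul_exp_neg_mul_sq (b := 1/2) (by norm_num) (s := 2)
    (by norm_num)).const_mul (Real.sqrt (2 * Real.pi))⁻¹
  refine h.congr (Filter.EventuallyEq.of_eq (funext fun x => ?_))
  rw [show ((2:ℝ)) = ((2:ℕ):ℝ) by norm_num, Real.rpow_natCast, phi_eq']
  ring

lemma tendsto_rpow_phi (s : ℝ) :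
    Tendsto (fun x => x ^ s * phi x) atTop (𝓝 0) := by
  have h := (rpow_mul_exp_neg_mul_sq_isLittleO_exp_neg (b := 1/2) (by norm_num) s).const_mul_left
    (Real.sqrt (2 * Real.pi))⁻¹
  have h2 : Tendsto (fun x : ℝ => Real.exp (-(1/2) * x)) atTop (𝓝 0) := by
    apply Real.tendsto_exp_atBot.comp
    exact (tendsto_id.const_mul_atTop_of_neg (by norm_num)).comp tendsto_id
  have h3 := (h.trans_isBigO (Asymptotics.isBigO_refl _ _)).trans_tendsto h2
  refine h3.congr' ?_
  filter_upwards with x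
  rw [phi_eq']
  ring

lemma tendsto_phi : Tendsto phi atTop (𝓝 0) := by
  have := tendsto_rpow_phi 0
  refine this.congr' ?_
  filter_upwards [eventually_gt_atTop 0] with x hx
  rw [Real.rpow_zero, one_mul]

lemma tendsto_id_phi : Tendsto (fun x => x * phi x) atTop (𝓝 0) := by
  have := tendsto_rpow_phi 1
  refine this.congr' ?_
  filter_upwards with x
  rw [Real.rpow_one]

lemma hasDerivAt_neg_phi (x : ℝ) : HasDerivAt (fun y => -phi y) (x * phi x) x := by
  have h : HasDerivAt (fun y : ℝ => -y ^ 2 / 2) (-x) x := by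
    have := ((hasDerivAt_pow 2 x).neg).div_const 2
    simpa using this.congr_deriv (by push_cast; ring)
  have h2 := (h.exp.const_mul (Real.sqrt (2 * Real.pi))⁻¹).neg
  refine h2.congr_deriv ?_
  unfold phi
  ring

lemma integral_Ioi_id_phi (α : ℝ) : ∫ x in Ioi α, x * phi x = phi α := by
  have h := integral_Ioi_of_hasDerivAt_of_tendsto' (a := α) (m := (0:ℝ))
    (fun x _ => hasDerivAt_neg_phi x) integrable_id_phi.integrableOn
    (tendsto_phi.neg.congr' (by filter_upwards with x; rfl) |>.mono_right (by rw [neg_zero]))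
  simpa using h

lemma hasDerivAt_neg_id_phi (x : ℝ) :
    HasDerivAt (fun y => -(y * phi y)) (x ^ 2 * phi x - phi x) x := by
  have hphi : HasDerivAt phi (-(x * phi x)) x := by
    have := (hasDerivAt_neg_phi x).neg
    simpa [Pi.neg_def] using this
  have h1 := ((hasDerivAt_id x).mul hphi).neg
  refine h1.congr_deriv ?_
  simp only [id_eq]
  ring

lemma integral_Ioi_sq_phi_sub (α : ℝ) :
    ∫ x in Ioi α, (x ^ 2 * phi x - phi x) = α * phi α := by
  have h := integral_Ioi_of_hasDerivAt_of_tendsto' (a := α) (m := (0:ℝ))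
    (fun x _ => hasDerivAt_neg_id_phi x)
    (integrable_sq_phi.sub integrable_phi).integrableOn
    (tendsto_id_phi.neg.mono_right (by rw [neg_zero]))
  simpa using h

lemma integral_phi_total : ∫ x, phi x = 1 := by
  rw [← phi_eq]; exact integral_gaussianPDFReal_eq_one 0 one_ne_zero

lemma integral_Ioi_phi (α : ℝ) : ∫ x in Ioi α, phi x = 1 - Phi α := by
  have hsplit := intervalIntegral.integral_Iic_add_Ioi (b := α) integrable_phi.integrableOn
    integrable_phi.integrableOn (μ := volume) (f := phi)
  have hIic : ∫ x in Iic α, phi x = Phi α := by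
    rw [Phi]
    exact (setIntegral_congr_set Iio_ae_eq_Iic).symm
  rw [integral_phi_total, hIic] at hsplit
  linarith

lemma integral_Ioi_phi_pos (α : ℝ) : 0 < ∫ x in Ioi α, phi x := by
  rw [setIntegral_pos_iff_support_of_nonneg_ae
    (ae_of_all _ fun x => (phi_pos x).le) integrable_phi.integrableOn]
  have : Function.support phi ∩ Ioi α = Ioi α := by
    rw [inter_eq_right]
    intro x _
    exact (phi_pos x).ne'
  rw [this]
  simp

lemma measurable_phi : Measurable phi := phi_eq ▸ measurable_gaussianPDFReal 0 1

lemma my_integral_gaussianReal_Ioi (α : ℝ) (f : ℝ → ℝ) :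
    ∫ z in Ioi α, f z ∂(gaussianReal 0 1) = ∫ z in Ioi α, phi z * f z := by
  rw [gaussianReal_of_var_ne_zero 0 one_ne_zero]
  have hpdf : (gaussianPDF 0 1) = fun x => ((Real.toNNReal (phi x) : ℝ≥0) : ℝ≥0∞) := by
    ext x
    rw [gaussianPDF, phi_eq]
    rfl
  rw [hpdf, setIntegral_withDensity_eq_setIntegral_smul
    measurable_phi.real_toNNReal f measurableSet_Ioi]
  refine setIntegral_congr_fun measurableSet_Ioi fun x _ => ?_
  simp [NNReal.smul_def, Real.coe_toNNReal _ (phi_pos x).le]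

lemma meas_gaussian_Ioi (α : ℝ) :
    ((gaussianReal 0 1) (Ioi α)).toReal = ∫ x in Ioi α, phi x := by
  rw [gaussianReal_apply_eq_integral 0 one_ne_zero, phi_eq,
    ENNReal.toReal_ofReal (integral_nonneg fun x => (phi_pos x).le)]

lemma integrable_shift_sq_phi (m : ℝ) : Integrable (fun x => (x - m) ^ 2 * phi x) := by
  have h := (integrable_sq_phi.sub (integrable_id_phi.const_mul (2 * m))).add
    (integrable_phi.const_mul (m ^ 2))
  refine h.congr (Filter.EventuallyEq.of_eq (funext fun x => ?_))
  simp only [Pi.add_apply, Pi.sub_apply]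
  ring

lemma var_pos (α m : ℝ) : 0 < ∫ x in Ioi α, (x - m) ^ 2 * phi x := by
  rw [setIntegral_pos_iff_support_of_nonneg_ae
    (ae_of_all _ fun x => mul_nonneg (sq_nonneg _) (phi_pos x).le)
    (integrable_shift_sq_phi m).integrableOn]
  refine lt_of_lt_of_le ?_ (measure_mono (t := Function.support (fun x => (x - m) ^ 2 * phi x) ∩ Ioi α)
    (s := Ioi α \ {m}) ?_)
  · rw [measure_diff_null (volume_singleton)]
    simp
  · rintro x ⟨hx, hxm⟩
    refine ⟨?_, hx⟩
    have hx' : x - m ≠ 0 := sub_ne_zero.mpr (by simpa using hxm)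
    exact mul_ne_zero (pow_ne_zero _ hx') (phi_pos x).ne'

lemma var_expand (α m : ℝ) :
    ∫ x in Ioi α, (x - m) ^ 2 * phi x
      = (∫ x in Ioi α, x ^ 2 * phi x) - 2 * m * (∫ x in Ioi α, x * phi x)
        + m ^ 2 * (∫ x in Ioi α, phi x) := by
  rw [← integral_const_mul, ← integral_const_mul, ← integral_sub
      integrable_sq_phi.integrableOn ((integrable_id_phi.const_mul (2*m)).integrableOn),
    ← integral_add (Integrable.integrableOn (by
      exact integrable_sq_phi.sub (integrable_id_phi.const_mul (2*m))))
      ((integrable_phi.const_mul (m^2)).integrableOn)]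
  refine setIntegral_congr_fun measurableSet_Ioi fun x _ => ?_
  ring

lemma mills_pos (α : ℝ) : α * (∫ x in Ioi α, phi x) < phi α := by
  have hpos : 0 < ∫ x in Ioi α, (x - α) * phi x := by
    rw [setIntegral_pos_iff_support_of_nonneg_ae ?nonneg
      ((integrable_id_phi.sub (integrable_phi.const_mul α)).integrableOn.congr_fun
        (fun x _ => by simp only [Pi.sub_apply]; ring) measurableSet_Ioi)]
    case nonneg =>
      filter_upwards [ae_restrict_mem measurableSet_Ioi] with x hx
      exact mul_nonneg (by simp [le_of_lt (mem_Ioi.mp hx)]) (phi_pos x).le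
    have : Function.support (fun x => (x - α) * phi x) ∩ Ioi α = Ioi α := by
      rw [inter_eq_right]
      intro x hx
      exact mul_ne_zero (sub_ne_zero.mpr (ne_of_gt (mem_Ioi.mp hx))) (phi_pos x).ne'
    rw [this]
    simp
  have hexp : ∫ x in Ioi α, (x - α) * phi x
      = (∫ x in Ioi α, x * phi x) - α * (∫ x in Ioi α, phi x) := by
    rw [← integral_const_mul, ← integral_sub integrable_id_phi.integrableOn
      ((integrable_phi.const_mul α).integrableOn)]
    refine setIntegral_congr_fun measurableSet_Ioi fun x _ => ?_
    ring
  rw [hexp, integral_Ioi_id_phi] at hpos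
  linarith

lemma integral_Ioi_sq_phi (α : ℝ) :
    ∫ x in Ioi α, x ^ 2 * phi x = (∫ x in Ioi α, phi x) + α * phi α := by
  have h1 : ∫ x in Ioi α, x ^ 2 * phi x
      = (∫ x in Ioi α, (x ^ 2 * phi x - phi x)) + ∫ x in Ioi α, phi x := by
    rw [integral_sub integrable_sq_phi.integrableOn integrable_phi.integrableOn]
    ring
  rw [h1, integral_Ioi_sq_phi_sub]
  ring

/-- For `Z ~ N(0,1)`, the conditional variance
`Var(Z | Z > α) = E[Z² | Z > α] − (E[Z | Z > α])² = 1 − λ(α)(λ(α) − α)`,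
and this quantity lies strictly between `0` and `1`. -/
theorem truncated_std_normal_variance (α : ℝ) :
    (∫ z in Ioi α, z ^ 2 ∂(gaussianReal 0 1)) / ((gaussianReal 0 1) (Ioi α)).toReal
        - ((∫ z in Ioi α, z ∂(gaussianReal 0 1)) / ((gaussianReal 0 1) (Ioi α)).toReal) ^ 2
      = 1 - lam α * (lam α - α)
    ∧ 0 < 1 - lam α * (lam α - α)
    ∧ 1 - lam α * (lam α - α) < 1 := by
  set S := ∫ x in Ioi α, phi x with hSdef
  have hS : 0 < S := integral_Ioi_phi_pos α
  have hSΦ : S = 1 - Phi α := integral_Ioi_phi α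
  have hT : ((gaussianReal 0 1) (Ioi α)).toReal = S := meas_gaussian_Ioi α
  have hE1 : (∫ z in Ioi α, z ∂(gaussianReal 0 1)) = phi α := by
    rw [my_integral_gaussianReal_Ioi α (fun z => z)]
    rw [show (fun z => phi z * z) = fun z => z * phi z from funext fun z => mul_comm _ _]
    exact integral_Ioi_id_phi α
  have hE2 : (∫ z in Ioi α, z ^ 2 ∂(gaussianReal 0 1)) = S + α * phi α := by
    rw [my_integral_gaussianReal_Ioi α (fun z => z ^ 2)]
    rw [show (fun z => phi z * z ^ 2) = fun z => z ^ 2 * phi z from funext fun z => mul_comm _ _]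
    rw [integral_Ioi_sq_phi]
  have hφ : 0 < phi α := phi_pos α
  have hmills : α * S < phi α := mills_pos α
  have hlam : lam α = phi α / S := by rw [lam, hSΦ]
  have hformula : 1 - lam α * (lam α - α) = (S + α * phi α) / S - (phi α / S) ^ 2 := by
    rw [hlam]
    field_simp
    ring
  refine ⟨?_, ?_, ?_⟩
  · rw [hE1, hE2, hT, hformula]
  · rw [hformula]
    have hV := var_pos α (phi α / S)
    rw [var_expand, integral_Ioi_sq_phi, integral_Ioi_id_phi] at hV
    have heq : (S + α * phi α) / S - (phi α / S) ^ 2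
        = ((S + α * phi α) - 2 * (phi α / S) * phi α + (phi α / S) ^ 2 * S) / S := by
      field_simp
      ring
    rw [heq]
    exact div_pos hV hS
  · have h1 : 0 < lam α := by
      rw [hlam]
      exact div_pos hφ hS
    have h2 : 0 < lam α - α := by
      rw [hlam]
      rw [div_sub' hS.ne']
      exact div_pos (by linarith) hS
    nlinarith [mul_pos h1 h2]
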